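/- In ℓ¹ (the space of absolutely summable real sequences), if a sequence (z^{(i)})_{i=1}^p and integers 0 = n₀ ≤ n₁ ≤ ⋯ ≤ n_p satisfy ‖z^{(i)}‖ ≥ β/2, Σ_{j>n_i} |z^{(i)}_j| < ε·2^{−i}, and Σ_{j≤n_{i−1}} |z^{(i)}_j| < ε·2^{−i} for each i, then ‖Σ_{i=1}^p z^{(i)}‖ ≥ pβ/2 − 4ε. -/

import Mathlib

open Filter Set MeasureTheory

structure TaggedPartition (a b : ℝ) where
  n : ℕ
  hn : 0 < n
  t : ℕ → ℝ
  s : ℕ → ℝ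
  left : t 0 = a
  right : t n = b
  mono : ∀ i < n, t i < t (i + 1)
  tag : ∀ i < n, s i ∈ Set.Icc (t i) (t (i + 1))

/-- The mesh of a tagged partition: the maximal length of its subintervals. -/
def TaggedPartition.mesh {a b : ℝ} (P : TaggedPartition a b) : ℝ :=
  (Finset.range P.n).sup' (Finset.nonempty_range_iff.mpr P.hn.ne') fun i => P.t (i + 1) - P.t i

/-- The Riemann sum of `f` over a tagged partition. -/
def riemannSum {X : Type*} [AddCommGroup X] [Module ℝ X] {a b : ℝ}
    (f : ℝ → X) (P : TaggedPartition a b) : X :=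
  ∑ i ∈ Finset.range P.n, (P.t (i + 1) - P.t i) • f (P.s i)

/-- `f` is Riemann integrable on `[a,b]` with integral `x`. -/
def HasRiemannIntegral {X : Type*} [NormedAddCommGroup X] [NormedSpace ℝ X]
    (f : ℝ → X) (a b : ℝ) (x : X) : Prop :=
  ∀ ε > 0, ∃ δ > 0, ∀ P : TaggedPartition a b, P.mesh < δ → ‖riemannSum f P - x‖ ≤ ε

/-- `f` is Riemann integrable on `[a,b]`. -/
def RiemannIntegrableOn {X : Type*} [NormedAddCommGroup X] [NormedSpace ℝ X]
    (f : ℝ → X) (a b : ℝ) : Prop :=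
  ∃ x : X, HasRiemannIntegral f a b x

private lemma aux_blockEq (f : ℕ → ℝ) (n : ℕ → ℕ) (hmono : Monotone n) (a b : ℕ) (hab : a ≤ b) :
    ∑ i ∈ Finset.Icc (a+1) b, ∑ j ∈ Finset.Ico (n (i-1)) (n i), f j
      = ∑ j ∈ Finset.Ico (n a) (n b), f j := by
  induction b, hab using Nat.le_induction with
  | base => rw [Finset.Icc_eq_empty (by omega), Finset.Ico_self]; simp
  | succ b hab ih =>
      rw [Finset.sum_Icc_succ_top (by omega), ih]
      simp only [Nat.add_sub_cancel]
      exact Finset.sum_Ico_consecutive f (hmono hab) (hmono (Nat.le_succ b))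

private lemma aux_headEq (f : ℕ → ℝ) (m : ℕ) :
    ∑' (j : {j : ℕ // (j : ℕ) < m}), f j = ∑ j ∈ Finset.range m, f j := by
  rw [← Finset.tsum_subtype (Finset.range m) f]
  exact ((Equiv.subtypeEquivRight (fun j => (Finset.mem_range (n := m)).symm)).tsum_eq
    (fun x : {x // x ∈ Finset.range m} => f x))

private lemma aux_tailEq (f : ℕ → ℝ) (hf : Summable f) (m : ℕ) :
    ∑' (j : {j : ℕ // m ≤ j}), f j = (∑' j, f j) - ∑ j ∈ Finset.range m, f j := by
  have h := Summable.sum_add_tsum_compl (s := Finset.range m) hf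
  have e : ∑' (x : ↑((Finset.range m : Finset ℕ) : Set ℕ)ᶜ), f ↑x
      = ∑' (j : {j : ℕ // m ≤ j}), f j := by
    exact ((Equiv.subtypeEquivRight (fun j => by
      simp [Set.mem_compl_iff, Nat.not_lt])).tsum_eq
      (fun x : {j : ℕ // m ≤ j} => f x))
  linarith

/-- the key `ℓ¹` estimate: blocks that are almost disjointly supported and of
norm at least `β/2` have a sum of norm at least `pβ/2 - 4ε`.
(Coordinates are indexed by `ℕ`; the `1`-based coordinate `j > nᵢ` of the paper corresponds to
the `0`-based coordinate `j ≥ nᵢ`, and `j ≤ n_{i-1}` to `j < n_{i-1}`.) -/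
theorem stmt_18 {β ε : ℝ} (hβ : 0 < β) (hε : 0 < ε) (p : ℕ)
    (z : ℕ → lp (fun _ : ℕ => ℝ) 1) (n : ℕ → ℕ)
    (hn0 : n 0 = 0) (hmono : Monotone n)
    (h1 : ∀ i, 1 ≤ i → i ≤ p → β / 2 ≤ ‖z i‖)
    (h2 : ∀ i, 1 ≤ i → i ≤ p →
      (∑' j : {j : ℕ // n i ≤ j}, |(z i : ∀ _ : ℕ, ℝ) j|) < ε / 2 ^ i)
    (h3 : ∀ i, 1 ≤ i → i ≤ p →
      (∑' j : {j : ℕ // (j : ℕ) < n (i - 1)}, |(z i : ∀ _ : ℕ, ℝ) j|) < ε / 2 ^ i) :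
    (p : ℝ) * β / 2 - 4 * ε ≤ ‖∑ i ∈ Finset.Icc 1 p, z i‖ := by
  set w := ∑ i ∈ Finset.Icc 1 p, z i with hwdef
  have hsumm : ∀ x : lp (fun _ : ℕ => ℝ) 1, Summable (fun j => |(x : ∀ _ : ℕ, ℝ) j|) := by
    intro x
    have := (lp.memℓp x).summable (p := 1) (by norm_num)
    simpa [Real.rpow_one, Real.norm_eq_abs] using this
  have hnorm : ∀ x : lp (fun _ : ℕ => ℝ) 1, ‖x‖ = ∑' j, |(x : ∀ _ : ℕ, ℝ) j| := by
    intro x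
    rw [lp.norm_eq_tsum_rpow (by norm_num) x]
    simp [Real.rpow_one, Real.norm_eq_abs]
  -- coordinates of w
  have hw : ∀ j, (w : ∀ _ : ℕ, ℝ) j = ∑ k ∈ Finset.Icc 1 p, (z k : ∀ _ : ℕ, ℝ) j := by
    intro j
    rw [hwdef, lp.coeFn_sum]
    simp
  -- geometric bound
  have geo : ∑ i ∈ Finset.Icc 1 p, (ε / 2 ^ i) ≤ ε := by
    have hgs : ∀ q : ℕ, ∑ i ∈ Finset.Icc 1 q, ((1:ℝ)/2) ^ i = 1 - (1/2) ^ q := by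
      intro q
      induction q with
      | zero => simp
      | succ q ih =>
          rw [Finset.sum_Icc_succ_top (by omega), ih]
          ring
    have heq : ∑ i ∈ Finset.Icc 1 p, (ε / 2 ^ i) = ε * (1 - (1/2 : ℝ) ^ p) := by
      rw [← hgs p, Finset.mul_sum]
      refine Finset.sum_congr rfl fun i _ => ?_
      rw [div_pow, one_pow, mul_one_div]
    rw [heq]
    nlinarith [pow_nonneg (by norm_num : (0:ℝ) ≤ 1/2) p]
  -- Step 4: lower bound on block sum of z i
  have step4 : ∀ i ∈ Finset.Icc 1 p,
      β / 2 - 2 * (ε / 2 ^ i) ≤ ∑ j ∈ Finset.Ico (n (i-1)) (n i), |(z i : ∀ _ : ℕ, ℝ) j| := by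
    intro i hi
    obtain ⟨hi1, hip⟩ := Finset.mem_Icc.mp hi
    have htail := h2 i hi1 hip
    have hhead := h3 i hi1 hip
    rw [aux_tailEq _ (hsumm (z i)) (n i)] at htail
    have hhead' : ∑ j ∈ Finset.range (n (i-1)), |(z i : ∀ _ : ℕ, ℝ) j| < ε / 2 ^ i := by
      rw [← aux_headEq]; exact hhead
    have hsplit : ∑ j ∈ Finset.range (n (i-1)), |(z i : ∀ _ : ℕ, ℝ) j|
        + ∑ j ∈ Finset.Ico (n (i-1)) (n i), |(z i : ∀ _ : ℕ, ℝ) j|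
        = ∑ j ∈ Finset.range (n i), |(z i : ∀ _ : ℕ, ℝ) j| := by
      simp only [Finset.range_eq_Ico]
      exact Finset.sum_Ico_consecutive _ (Nat.zero_le _) (hmono (Nat.sub_le i 1))
    have h1i := h1 i hi1 hip
    rw [hnorm (z i)] at h1i
    linarith [hhead']
  -- Step 3: pointwise bound
  have step3 : ∀ i ∈ Finset.Icc 1 p, ∀ j : ℕ,
      |(z i : ∀ _ : ℕ, ℝ) j| - ∑ k ∈ (Finset.Icc 1 p).erase i, |(z k : ∀ _ : ℕ, ℝ) j|
        ≤ |(w : ∀ _ : ℕ, ℝ) j| := by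
    intro i hi j
    have hsplit : (z i : ∀ _ : ℕ, ℝ) j
        = (w : ∀ _ : ℕ, ℝ) j - ∑ k ∈ (Finset.Icc 1 p).erase i, (z k : ∀ _ : ℕ, ℝ) j := by
      rw [hw j, ← Finset.add_sum_erase _ _ hi]
      ring
    calc |(z i : ∀ _ : ℕ, ℝ) j| - ∑ k ∈ (Finset.Icc 1 p).erase i, |(z k : ∀ _ : ℕ, ℝ) j|
        ≤ |(z i : ∀ _ : ℕ, ℝ) j| - |∑ k ∈ (Finset.Icc 1 p).erase i, (z k : ∀ _ : ℕ, ℝ) j| := by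
          have := Finset.abs_sum_le_sum_abs (fun k => (z k : ∀ _ : ℕ, ℝ) j) ((Finset.Icc 1 p).erase i)
          linarith
      _ ≤ |(w : ∀ _ : ℕ, ℝ) j| := by
          rw [hsplit]
          have := abs_sub_abs_le_abs_sub ((w : ∀ _ : ℕ, ℝ) j - ∑ k ∈ (Finset.Icc 1 p).erase i, (z k : ∀ _ : ℕ, ℝ) j) (- ∑ k ∈ (Finset.Icc 1 p).erase i, (z k : ∀ _ : ℕ, ℝ) j)
          simp only [sub_neg_eq_add, sub_add_cancel, abs_neg] at this
          linarith
  -- cross term bound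
  have cross : ∑ i ∈ Finset.Icc 1 p, ∑ j ∈ Finset.Ico (n (i-1)) (n i),
      ∑ k ∈ (Finset.Icc 1 p).erase i, |(z k : ∀ _ : ℕ, ℝ) j| ≤ 2 * ε := by
    have swap1 : ∀ i, ∑ j ∈ Finset.Ico (n (i-1)) (n i),
        ∑ k ∈ (Finset.Icc 1 p).erase i, |(z k : ∀ _ : ℕ, ℝ) j|
        = ∑ k ∈ (Finset.Icc 1 p).erase i, ∑ j ∈ Finset.Ico (n (i-1)) (n i), |(z k : ∀ _ : ℕ, ℝ) j| :=
      fun i => Finset.sum_comm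
    calc ∑ i ∈ Finset.Icc 1 p, ∑ j ∈ Finset.Ico (n (i-1)) (n i),
          ∑ k ∈ (Finset.Icc 1 p).erase i, |(z k : ∀ _ : ℕ, ℝ) j|
        = ∑ i ∈ Finset.Icc 1 p, ∑ k ∈ (Finset.Icc 1 p).erase i,
            ∑ j ∈ Finset.Ico (n (i-1)) (n i), |(z k : ∀ _ : ℕ, ℝ) j| :=
          Finset.sum_congr rfl fun i _ => swap1 i
      _ = ∑ k ∈ Finset.Icc 1 p, ∑ i ∈ (Finset.Icc 1 p).erase k,
            ∑ j ∈ Finset.Ico (n (i-1)) (n i), |(z k : ∀ _ : ℕ, ℝ) j| := by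
          refine Finset.sum_comm' fun i k => ?_
          simp only [Finset.mem_erase]
          tauto
      _ ≤ ∑ k ∈ Finset.Icc 1 p, 2 * (ε / 2 ^ k) := by
          refine Finset.sum_le_sum fun k hk => ?_
          obtain ⟨hk1, hkp⟩ := Finset.mem_Icc.mp hk
          have hsplitset : (Finset.Icc 1 p).erase k
              = Finset.Icc 1 (k-1) ∪ Finset.Icc (k+1) p := by
            ext a
            simp only [Finset.mem_erase, Finset.mem_Icc, Finset.mem_union]
            omega
          have hdisj : Disjoint (Finset.Icc 1 (k-1)) (Finset.Icc (k+1) p) := by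
            rw [Finset.disjoint_left]
            intro a ha hb
            simp only [Finset.mem_Icc] at ha hb
            omega
          rw [hsplitset, Finset.sum_union hdisj]
          have part1 : ∑ i ∈ Finset.Icc 1 (k-1),
              ∑ j ∈ Finset.Ico (n (i-1)) (n i), |(z k : ∀ _ : ℕ, ℝ) j| < ε / 2 ^ k := by
            have hb := aux_blockEq (fun j => |(z k : ∀ _ : ℕ, ℝ) j|) n hmono 0 (k-1) (Nat.zero_le _)
            simp only [Nat.zero_add] at hb
            rw [hb, hn0, ← Finset.range_eq_Ico]
            rw [← aux_headEq]
            exact h3 k hk1 hkp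
          have part2 : ∑ i ∈ Finset.Icc (k+1) p,
              ∑ j ∈ Finset.Ico (n (i-1)) (n i), |(z k : ∀ _ : ℕ, ℝ) j| < ε / 2 ^ k := by
            have hb := aux_blockEq (fun j => |(z k : ∀ _ : ℕ, ℝ) j|) n hmono k p hkp
            rw [hb]
            have htail := h2 k hk1 hkp
            rw [aux_tailEq _ (hsumm (z k)) (n k)] at htail
            have hle : ∑ j ∈ Finset.range (n k), |(z k : ∀ _ : ℕ, ℝ) j|
                + ∑ j ∈ Finset.Ico (n k) (n p), |(z k : ∀ _ : ℕ, ℝ) j|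
                ≤ ∑' j, |(z k : ∀ _ : ℕ, ℝ) j| := by
              simp only [Finset.range_eq_Ico]
              rw [Finset.sum_Ico_consecutive _ (Nat.zero_le _) (hmono hkp)]
              rw [← Finset.range_eq_Ico]
              exact Summable.sum_le_tsum _ (fun j _ => abs_nonneg _) (hsumm (z k))
            linarith
          linarith
      _ ≤ 2 * ε := by
          rw [← Finset.mul_sum]
          linarith
  -- main chain
  have hcard : ((Finset.Icc 1 p).card : ℝ) = p := by
    rw [Nat.card_Icc]
    simp
  calc (p : ℝ) * β / 2 - 4 * ε
      ≤ (∑ i ∈ Finset.Icc 1 p, (β / 2 - 2 * (ε / 2 ^ i))) - 2 * ε := by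
        rw [Finset.sum_sub_distrib, Finset.sum_const, ← Finset.mul_sum]
        rw [nsmul_eq_mul, hcard]
        nlinarith [geo]
    _ ≤ (∑ i ∈ Finset.Icc 1 p, ∑ j ∈ Finset.Ico (n (i-1)) (n i), |(z i : ∀ _ : ℕ, ℝ) j|)
          - ∑ i ∈ Finset.Icc 1 p, ∑ j ∈ Finset.Ico (n (i-1)) (n i),
              ∑ k ∈ (Finset.Icc 1 p).erase i, |(z k : ∀ _ : ℕ, ℝ) j| :=
        sub_le_sub (Finset.sum_le_sum step4) cross
    _ = ∑ i ∈ Finset.Icc 1 p, ∑ j ∈ Finset.Ico (n (i-1)) (n i),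
          (|(z i : ∀ _ : ℕ, ℝ) j| - ∑ k ∈ (Finset.Icc 1 p).erase i, |(z k : ∀ _ : ℕ, ℝ) j|) := by
        rw [← Finset.sum_sub_distrib]
        exact Finset.sum_congr rfl fun i _ => (Finset.sum_sub_distrib _ _).symm
    _ ≤ ∑ i ∈ Finset.Icc 1 p, ∑ j ∈ Finset.Ico (n (i-1)) (n i), |(w : ∀ _ : ℕ, ℝ) j| :=
        Finset.sum_le_sum fun i hi => Finset.sum_le_sum fun j _ => step3 i hi j
    _ = ∑ j ∈ Finset.Ico (n 0) (n p), |(w : ∀ _ : ℕ, ℝ) j| := by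
        have := aux_blockEq (fun j => |(w : ∀ _ : ℕ, ℝ) j|) n hmono 0 p (Nat.zero_le _)
        simpa using this
    _ ≤ ∑' j, |(w : ∀ _ : ℕ, ℝ) j| :=
        Summable.sum_le_tsum _ (fun j _ => abs_nonneg _) (hsumm w)
    _ = ‖w‖ := (hnorm w).symm
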